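/- The function w ↦ (log(1 + w) - w / (2 + 2w)) / w is antitone (non-increasing) on the open interval (0, ∞). -/

import Mathlib

open Real

private lemma phi_deriv (x : ℝ) (hx : 0 < x) :
    HasDerivAt (fun w : ℝ => Real.log (1 + w) - w * (2 + 3 * w) / (2 * (1 + w) ^ 2))
      (x ^ 2 / (1 + x) ^ 3) x := by
  have h1 : (0:ℝ) < 1 + x := by linarith
  have hlog : HasDerivAt (fun w : ℝ => Real.log (1 + w)) (1 / (1 + x)) x := by
    have := (Real.hasDerivAt_log h1.ne').comp x ((hasDerivAt_id x).const_add 1)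
    exact this.congr_deriv (by simp)
  have hnum : HasDerivAt (fun w : ℝ => w * (2 + 3 * w)) (1 * (2 + 3 * x) + x * 3) x := by
    have := (hasDerivAt_id x).mul (((hasDerivAt_id x).const_mul 3).const_add 2)
    exact this.congr_deriv (by simp)
  have hden : HasDerivAt (fun w : ℝ => 2 * (1 + w) ^ 2) (2 * (2 * (1 + x))) x := by
    have : HasDerivAt (fun w : ℝ => (1 + w) ^ 2) (2 * (1 + x) ^ 1 * 1) x :=
      (((hasDerivAt_id x).const_add 1)).pow 2
    simpa using this.const_mul 2
  have hden' : 2 * (1 + x) ^ 2 ≠ 0 := by positivity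
  have hrat := hnum.div hden hden'
  have : HasDerivAt (fun w : ℝ => Real.log (1 + w) - w * (2 + 3 * w) / (2 * (1 + w) ^ 2)) _ x :=
    hlog.sub hrat
  convert this using 1
  field_simp
  ring

private lemma key (x : ℝ) (hx : 0 < x) :
    x * (2 + 3 * x) / (2 * (1 + x) ^ 2) ≤ Real.log (1 + x) := by
  set φ : ℝ → ℝ := fun w => Real.log (1 + w) - w * (2 + 3 * w) / (2 * (1 + w) ^ 2) with hφ
  have hmono : MonotoneOn φ (Set.Ici 0) := by
    apply monotoneOn_of_deriv_nonneg (convex_Ici 0)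
    · apply ContinuousOn.sub
      · apply ContinuousOn.log (by fun_prop)
        intro w hw
        simp only [Set.mem_Ici] at hw
        positivity
      · apply ContinuousOn.div (by fun_prop) (by fun_prop)
        intro w hw
        simp only [Set.mem_Ici] at hw
        positivity
    · intro w hw
      rw [interior_Ici] at hw
      exact ((phi_deriv w hw).differentiableAt).differentiableWithinAt
    · intro w hw
      rw [interior_Ici] at hw
      rw [(phi_deriv w hw).deriv]
      have : (0:ℝ) < 1 + w := by linarith [Set.mem_Ioi.mp hw]
      positivity
  have h0 : φ 0 ≤ φ x := hmono (Set.mem_Ici.mpr le_rfl) (Set.mem_Ici.mpr hx.le) hx.le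
  simp only [hφ, Real.log_one, add_zero, zero_mul, mul_zero, zero_div, sub_zero,
    zero_add] at h0
  linarith [h0]

theorem stmt_12 :
    AntitoneOn (fun w : ℝ => (Real.log (1 + w) - w / (2 + 2 * w)) / w) (Set.Ioi 0) := by
  apply antitoneOn_of_deriv_nonpos (convex_Ioi 0)
  · apply ContinuousOn.div _ continuousOn_id
    · intro w hw; exact (Set.mem_Ioi.mp hw).ne'
    apply ContinuousOn.sub
    · apply ContinuousOn.log (by fun_prop)
      intro w hw
      have := Set.mem_Ioi.mp hw
      positivity
    · apply ContinuousOn.div (by fun_prop) (by fun_prop)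
      intro w hw
      have := Set.mem_Ioi.mp hw
      positivity
  all_goals
    intro x hx
    rw [interior_Ioi] at hx
    have hx : (0:ℝ) < x := hx
    have h1 : (0:ℝ) < 1 + x := by linarith
    have h2 : (0:ℝ) < 2 + 2 * x := by linarith
    have hlog : HasDerivAt (fun w : ℝ => Real.log (1 + w)) (1 / (1 + x)) x := by
      have := (Real.hasDerivAt_log h1.ne').comp x ((hasDerivAt_id x).const_add 1)
      exact this.congr_deriv (by simp)
    have hfrac : HasDerivAt (fun w : ℝ => w / (2 + 2 * w))
        ((1 * (2 + 2 * x) - x * 2) / (2 + 2 * x) ^ 2) x := by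
      have := (hasDerivAt_id x).div (((hasDerivAt_id x).const_mul 2).const_add 2) h2.ne'
      exact this.congr_deriv (by simp)
    have hg := hlog.sub hfrac
    have hf := hg.div (hasDerivAt_id' x) hx.ne'
  · exact hf.differentiableAt.differentiableWithinAt
  · rw [HasDerivAt.deriv (f := fun w : ℝ => (Real.log (1 + w) - w / (2 + 2 * w)) / w) hf]
    apply div_nonpos_of_nonpos_of_nonneg _ (by positivity)
    have hk := key x hx
    rw [sub_nonpos]
    simp only [Pi.sub_apply]
    have heq : x * (2 + 3 * x) / (2 * (1 + x) ^ 2)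
        = (1 / (1 + x) - (1 * (2 + 2 * x) - x * 2) / (2 + 2 * x) ^ 2) * x - (- (x / (2 + 2 * x))) := by
      field_simp
      ring
    nlinarith [hk, heq]
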